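/- In the free associative algebra ℂ⟨X¹,X²⟩, the coefficient of [X¹,X²]^m in the expansion of X^m(λ₁)·X^m(λ₂) in the basis of symmetrized monomials separated by commutators is [12]^m/(m+1)!, i.e. X^m(λ₁)X^m(λ₂) = ([12]^m/(m+1)!)·C^m + (terms containing at least one symmetrized factor of positive degree), where C = [X¹,X²] and [12] is the determinant of the pair of spinors. -/

import Mathlib

/-!
Statement 6: In ℂ⟨X¹,X²⟩, the coefficient of C^m in the expansion of X^m(λ₁)X^m(λ₂)
in the basis of symmetrized monomials separated by commutators is [12]^m/(m+1)!:
  X^m(λ₁)X^m(λ₂) = ([12]^m/(m+1)!)·C^m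
    + (terms containing at least one symmetrized factor of positive degree).
-/

noncomputable section

open scoped BigOperators

abbrev FA := FreeAlgebra ℂ (Fin 2)

def Xg (i : Fin 2) : FA := FreeAlgebra.ι ℂ i

def Cc : FA := Xg 0 * Xg 1 - Xg 1 * Xg 0

def Xs (l : ℂ × ℂ) : FA := l.1 • Xg 0 + l.2 • Xg 1

def bra (l₁ l₂ : ℂ × ℂ) : ℂ := l₁.1 * l₂.2 - l₁.2 * l₂.1

/-- the doubly-graded symmetrized monomial `X^{k,l}(λ₁,λ₂)` -/
def Xkl (l₁ l₂ : ℂ × ℂ) (k l : ℕ) : FA :=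
  ((Nat.choose (k + l) k : ℂ))⁻¹ •
    ∑ S ∈ Finset.powersetCard k (Finset.univ : Finset (Fin (k + l))),
      (List.ofFn fun i => if i ∈ S then Xs l₁ else Xs l₂).prod

/-- the chain `X^{k₁,l₁}(λ₁,λ₂)·C·X^{k₂,l₂}(λ₁,λ₂)·C⋯C·X^{k_{a+1},l_{a+1}}(λ₁,λ₂)` -/
def chain (l₁ l₂ : ℂ × ℂ) {a : ℕ} (ks ls : Fin a → ℕ) : FA :=
  ((List.ofFn fun i => Xkl l₁ l₂ (ks i) (ls i)).intersperse Cc).prod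

/-- the basis chains containing at least one symmetrized factor of positive degree -/
def posChainSet (l₁ l₂ : ℂ × ℂ) : Set FA :=
  {x | ∃ (a : ℕ) (ks ls : Fin (a + 1) → ℕ), (∃ i, 0 < ks i + ls i) ∧ x = chain l₁ l₂ ks ls}

/-! ### symmetrized sums -/

def symF (u v : FA) (n k : ℕ) : FA :=
  ∑ S ∈ Finset.powersetCard k (Finset.univ : Finset (Fin n)),
    (List.ofFn fun i => if i ∈ S then u else v).prod

lemma symF_zero (u v : FA) (n : ℕ) : symF u v n 0 = v ^ n := by
  simp only [symF, Finset.powersetCard_zero, Finset.sum_singleton]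
  simp [List.prod_ofFn, Finset.prod_const]

lemma symF_self (u v : FA) (n : ℕ) : symF u v n n = u ^ n := by
  have h := Finset.powersetCard_self (Finset.univ : Finset (Fin n))
  rw [Finset.card_univ, Fintype.card_fin] at h
  simp only [symF]
  rw [h, Finset.sum_singleton]
  simp [List.prod_ofFn, Finset.prod_const]

lemma symF_of_gt (u v : FA) {n k : ℕ} (h : n < k) : symF u v n k = 0 := by
  simp only [symF]
  rw [Finset.powersetCard_eq_empty.2 (by simpa using h), Finset.sum_empty]

lemma fin_univ_succ_insert (n : ℕ) :
    (Finset.univ : Finset (Fin (n + 1))) =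
      insert (Fin.last n) (Finset.univ.map Fin.castSuccEmb) := by
  ext i
  simp only [Finset.mem_univ, true_iff, Finset.mem_insert, Finset.mem_map, Fin.coe_castSuccEmb]
  rcases Fin.eq_castSucc_or_eq_last i with ⟨j, rfl⟩ | rfl
  · exact Or.inr ⟨j, by simp⟩
  · exact Or.inl rfl

lemma prodFn_map (u v : FA) {n : ℕ} (S : Finset (Fin n)) :
    (List.ofFn fun i : Fin (n + 1) => if i ∈ S.map Fin.castSuccEmb then u else v).prod
      = (List.ofFn fun i : Fin n => if i ∈ S then u else v).prod * v := by
  rw [List.ofFn_succ', List.prod_concat]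
  have h1 : ∀ i : Fin n, (if i.castSucc ∈ S.map Fin.castSuccEmb then u else v)
      = if i ∈ S then u else v := by
    intro i
    congr 1
    simp only [Finset.mem_map, Fin.coe_castSuccEmb, eq_iff_iff]
    constructor
    · rintro ⟨j, hj, hje⟩
      rwa [← Fin.castSucc_inj.mp hje]
    · intro hi; exact ⟨i, hi, rfl⟩
  have h2 : Fin.last n ∉ S.map Fin.castSuccEmb := by
    simp only [Finset.mem_map, Fin.coe_castSuccEmb]
    rintro ⟨j, _, hje⟩
    exact absurd hje (Fin.castSucc_lt_last j).ne
  simp only [h1, h2, if_neg, ite_eq_right_iff]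
  simp [h2]

lemma prodFn_insert (u v : FA) {n : ℕ} (S : Finset (Fin n)) :
    (List.ofFn fun i : Fin (n + 1) =>
        if i ∈ insert (Fin.last n) (S.map Fin.castSuccEmb) then u else v).prod
      = (List.ofFn fun i : Fin n => if i ∈ S then u else v).prod * u := by
  rw [List.ofFn_succ', List.prod_concat]
  have h1 : ∀ i : Fin n,
      (if i.castSucc ∈ insert (Fin.last n) (S.map Fin.castSuccEmb) then u else v)
      = if i ∈ S then u else v := by
    intro i
    congr 1
    simp only [Finset.mem_insert, Finset.mem_map, Fin.coe_castSuccEmb, eq_iff_iff]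
    constructor
    · rintro (h | ⟨j, hj, hje⟩)
      · exact absurd h (Fin.castSucc_lt_last i).ne
      · rwa [← Fin.castSucc_inj.mp hje]
    · intro hi; exact Or.inr ⟨i, hi, rfl⟩
  simp only [h1]
  simp

lemma symF_succ (u v : FA) (n k : ℕ) :
    symF u v (n + 1) (k + 1) = symF u v n (k + 1) * v + symF u v n k * u := by
  have hlast : Fin.last n ∉ (Finset.univ.map (Fin.castSuccEmb : Fin n ↪ Fin (n + 1))) := by
    simp only [Finset.mem_map, Fin.coe_castSuccEmb]
    rintro ⟨j, _, hje⟩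
    exact absurd hje (Fin.castSucc_lt_last j).ne
  simp only [symF]
  rw [fin_univ_succ_insert n, Finset.powersetCard_succ_insert hlast]
  rw [Finset.sum_union ?hdisj]
  case hdisj =>
    rw [Finset.disjoint_left]
    intro S hS hS'
    have hnl : Fin.last n ∉ S := fun hmem => hlast ((Finset.mem_powersetCard.mp hS).1 hmem)
    obtain ⟨T, hT, rfl⟩ := Finset.mem_image.mp hS'
    exact hnl (Finset.mem_insert_self _ _)
  congr 1
  · rw [Finset.powersetCard_map, Finset.sum_map, Finset.sum_mul]
    simp only [RelEmbedding.coe_toEmbedding, Finset.mapEmbedding_apply]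
    exact Finset.sum_congr rfl fun S _ => prodFn_map u v S
  · have hnotmem : ∀ S ∈ (Finset.powersetCard k (Finset.univ : Finset (Fin n))).map
        (Finset.mapEmbedding Fin.castSuccEmb).toEmbedding, Fin.last n ∉ S := by
      intro S hS
      obtain ⟨T, _, rfl⟩ := Finset.mem_map.mp hS
      simp only [RelEmbedding.coe_toEmbedding, Finset.mapEmbedding_apply, Finset.mem_map, Fin.coe_castSuccEmb]
      rintro ⟨j, _, hje⟩
      exact absurd hje (Fin.castSucc_lt_last j).ne
    rw [Finset.powersetCard_map, Finset.sum_image ?hinj, Finset.sum_map, Finset.sum_mul]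
    case hinj =>
      intro S hS T hT h
      have h1 := hnotmem S hS
      have h2 := hnotmem T hT
      rw [← Finset.erase_insert h1, ← Finset.erase_insert h2, h]
    simp only [RelEmbedding.coe_toEmbedding, Finset.mapEmbedding_apply]
    exact Finset.sum_congr rfl fun S _ => prodFn_insert u v S

/-! ### scalar pulling and binomial -/

lemma symF_smul (u v : FA) (α β : ℂ) : ∀ (n k l : ℕ), k + l = n →
    symF (α • u) (β • v) n k = (α ^ k * β ^ l) • symF u v n k := by
  intro n
  induction n with
  | zero =>
    intro k l hkl
    have hk : k = 0 := by omega
    have hl : l = 0 := by omega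
    subst hk; subst hl
    simp [symF_zero]
  | succ n ih =>
    intro k l hkl
    cases k with
    | zero =>
      have hl : l = n + 1 := by omega
      subst hl
      rw [symF_zero, symF_zero, smul_pow]
      simp [smul_smul]
    | succ k' =>
      cases l with
      | zero =>
        have hk : k' + 1 = n + 1 := by omega
        rw [hk, symF_self, symF_self, smul_pow]
        simp [smul_smul]
      | succ l' =>
        rw [symF_succ, symF_succ, ih (k' + 1) l' (by omega), ih k' (l' + 1) (by omega)]
        rw [smul_add]
        congr 1
        · rw [smul_mul_assoc, mul_smul_comm, smul_smul]
          congr 1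
          ring
        · rw [smul_mul_assoc, mul_smul_comm, smul_smul]
          congr 1
          ring

lemma binom (u v : FA) : ∀ n : ℕ, (u + v) ^ n = ∑ k ∈ Finset.range (n + 1), symF u v n k := by
  intro n
  induction n with
  | zero => simp [symF_zero]
  | succ n ih =>
    have hv : ∑ k ∈ Finset.range (n + 1), symF u v n k * v
        = v ^ (n + 1) + ∑ k ∈ Finset.range (n + 1), symF u v n (k + 1) * v := by
      have h1 : ∑ k ∈ Finset.range (n + 2), symF u v n k * v
          = symF u v n 0 * v + ∑ k ∈ Finset.range (n + 1), symF u v n (k + 1) * v := by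
        rw [Finset.sum_range_succ']
        abel
      have h2 : ∑ k ∈ Finset.range (n + 2), symF u v n k * v
          = ∑ k ∈ Finset.range (n + 1), symF u v n k * v + symF u v n (n + 1) * v := by
        rw [Finset.sum_range_succ]
      rw [symF_of_gt u v (by omega), zero_mul, add_zero] at h2
      rw [← h2, h1, symF_zero, ← pow_succ]
    rw [pow_succ, ih, Finset.sum_mul]
    simp only [mul_add]
    rw [Finset.sum_add_distrib, hv]
    rw [Finset.sum_range_succ' (fun k => symF u v (n + 1) k) (n + 1)]
    simp only [symF_succ, symF_zero]
    rw [Finset.sum_add_distrib]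
    abel

lemma Apow (u v : FA) (α β : ℂ) (n : ℕ) :
    (α • u + β • v) ^ n
      = ∑ k ∈ Finset.range (n + 1), (α ^ k * β ^ (n - k)) • symF u v n k := by
  rw [binom]
  refine Finset.sum_congr rfl fun k hk => ?_
  have hk' : k ≤ n := by simpa [Nat.lt_succ_iff] using hk
  exact symF_smul u v α β n k (n - k) (by omega)

lemma symF_one (u v : FA) : ∀ n : ℕ,
    symF u v (n + 1) 1 = ∑ p ∈ Finset.HasAntidiagonal.antidiagonal n, v ^ p.1 * u * v ^ p.2 := by
  intro n
  induction n with
  | zero =>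
    rw [symF_self]
    simp
  | succ n ih =>
    rw [symF_succ, ih, symF_zero]
    rw [Finset.Nat.antidiagonal_succ']
    rw [Finset.sum_cons, Finset.sum_map, Finset.sum_mul]
    simp only [Function.Embedding.coe_prodMap, Prod.map_apply, Function.Embedding.coeFn_mk,
      Function.Embedding.refl_apply, Prod.map_fst, Prod.map_snd, id_eq]
    rw [add_comm]
    congr 1
    · simp [pow_succ, mul_assoc]
    · refine Finset.sum_congr rfl fun p _ => ?_
      rw [pow_succ, mul_assoc]

lemma Xkl_symF (l₁ l₂ : ℂ × ℂ) (k l : ℕ) :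
    symF (Xs l₁) (Xs l₂) (k + l) k = ((k + l).choose k : ℂ) • Xkl l₁ l₂ k l := by
  have hC : (((k + l).choose k : ℕ) : ℂ) ≠ 0 := by
    exact_mod_cast (Nat.choose_pos (by omega)).ne'
  rw [Xkl, smul_smul, mul_inv_cancel₀ hC, one_smul]
  rfl

/-! ### transport identities -/

lemma t1 (A X w : FA) (h : X * A = A * X + w) :
    ∀ i : ℕ, A ^ (i + 1) * X
      = X * A ^ (i + 1) - ∑ p ∈ Finset.HasAntidiagonal.antidiagonal i, A ^ p.1 * w * A ^ p.2 := by
  have h' : A * X = X * A - w := eq_sub_of_add_eq h.symm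
  intro i
  induction i with
  | zero => simp [h']
  | succ i ih =>
    have e1 : A ^ (i + 2) * X = A * (A ^ (i + 1) * X) := by
      rw [← mul_assoc, ← pow_succ']
    rw [e1, ih, mul_sub, Finset.mul_sum]
    have e2 : A * (X * A ^ (i + 1)) = X * A ^ (i + 2) - w * A ^ (i + 1) := by
      rw [← mul_assoc, h', sub_mul]
      congr 1
      rw [mul_assoc, ← pow_succ']
    rw [e2, Finset.Nat.antidiagonal_succ, Finset.sum_cons, Finset.sum_map]
    simp only [Function.Embedding.coe_prodMap, Prod.map_apply, Function.Embedding.coeFn_mk,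
      Function.Embedding.refl_apply, Prod.map_fst, Prod.map_snd, id_eq]
    rw [pow_zero, one_mul, sub_sub]
    congr 2
    refine Finset.sum_congr rfl fun p _ => ?_
    rw [pow_succ', mul_assoc, mul_assoc, mul_assoc]

lemma MT (A X w : FA) (h : X * A = A * X + w) :
    ∀ n : ℕ, ((n + 2 : ℕ) : ℂ) • (X * A ^ (n + 1)) =
      (∑ p ∈ Finset.HasAntidiagonal.antidiagonal (n + 1), A ^ p.1 * X * A ^ p.2)
      + ∑ p ∈ Finset.HasAntidiagonal.antidiagonal n, ((p.2 + 1 : ℕ) : ℂ) • (A ^ p.1 * w * A ^ p.2) := by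
  have h' : A * X = X * A - w := eq_sub_of_add_eq h.symm
  intro n
  induction n with
  | zero =>
    have had : Finset.HasAntidiagonal.antidiagonal 1 = {((0:ℕ), (1:ℕ)), ((1:ℕ), (0:ℕ))} := rfl
    rw [had]
    rw [Finset.sum_pair (by decide)]
    simp only [Finset.Nat.antidiagonal_zero, Finset.sum_singleton]
    simp only [pow_zero, pow_one, one_mul, mul_one, zero_add, Nat.cast_ofNat, Nat.cast_one,
      one_smul]
    rw [h', two_smul]
    abel
  | succ n ih =>
    have ihA : ((n + 2 : ℕ) : ℂ) • (X * A ^ (n + 2))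
        = (∑ p ∈ Finset.HasAntidiagonal.antidiagonal (n + 1), A ^ p.1 * X * A ^ (p.2 + 1))
          + ∑ p ∈ Finset.HasAntidiagonal.antidiagonal n, ((p.2 + 1 : ℕ) : ℂ) • (A ^ p.1 * w * A ^ (p.2 + 1)) := by
      have h0 : ((n + 2 : ℕ) : ℂ) • (X * A ^ (n + 2))
          = (((n + 2 : ℕ) : ℂ) • (X * A ^ (n + 1))) * A := by
        rw [smul_mul_assoc, mul_assoc, ← pow_succ]
      rw [h0, ih, add_mul, Finset.sum_mul, Finset.sum_mul]
      congr 1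
      · exact Finset.sum_congr rfl fun p _ => by rw [mul_assoc, ← pow_succ]
      · exact Finset.sum_congr rfl fun p _ => by rw [smul_mul_assoc, mul_assoc, ← pow_succ]
    have e2 : ∑ p ∈ Finset.HasAntidiagonal.antidiagonal (n + 1), ((p.2 + 1 : ℕ) : ℂ) • (A ^ p.1 * w * A ^ p.2)
        = (A ^ (n + 1) * w)
          + (∑ p ∈ Finset.HasAntidiagonal.antidiagonal n, ((p.2 + 1 : ℕ) : ℂ) • (A ^ p.1 * w * A ^ (p.2 + 1))
             + ∑ p ∈ Finset.HasAntidiagonal.antidiagonal n, A ^ p.1 * w * A ^ (p.2 + 1)) := by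
      rw [Finset.Nat.antidiagonal_succ', Finset.sum_cons, Finset.sum_map]
      simp only [Function.Embedding.coe_prodMap, Prod.map_apply, Function.Embedding.coeFn_mk,
        Function.Embedding.refl_apply, Prod.map_fst, Prod.map_snd, id_eq]
      congr 1
      · simp
      · rw [← Finset.sum_add_distrib]
        refine Finset.sum_congr rfl fun p _ => ?_
        have hc : ((p.2 + 1 + 1 : ℕ) : ℂ) = ((p.2 + 1 : ℕ) : ℂ) + 1 := by push_cast; ring
        rw [hc, add_smul, one_smul]
    have e3 : ∑ p ∈ Finset.HasAntidiagonal.antidiagonal (n + 2), A ^ p.1 * X * A ^ p.2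
        = A ^ (n + 2) * X + ∑ p ∈ Finset.HasAntidiagonal.antidiagonal (n + 1), A ^ p.1 * X * A ^ (p.2 + 1) := by
      rw [Finset.Nat.antidiagonal_succ', Finset.sum_cons, Finset.sum_map]
      simp only [Function.Embedding.coe_prodMap, Prod.map_apply, Function.Embedding.coeFn_mk,
        Function.Embedding.refl_apply, Prod.map_fst, Prod.map_snd, id_eq]
      congr 1
      simp
    have e4 : A ^ (n + 2) * X = X * A ^ (n + 2)
        - (A ^ (n + 1) * w + ∑ p ∈ Finset.HasAntidiagonal.antidiagonal n, A ^ p.1 * w * A ^ (p.2 + 1)) := by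
      rw [t1 A X w h (n + 1)]
      congr 1
      rw [Finset.Nat.antidiagonal_succ', Finset.sum_cons, Finset.sum_map]
      simp only [Function.Embedding.coe_prodMap, Prod.map_apply, Function.Embedding.coeFn_mk,
        Function.Embedding.refl_apply, Prod.map_fst, Prod.map_snd, id_eq]
      congr 1
      simp
    have hcast : ((n + 1 + 2 : ℕ) : ℂ) = ((n + 2 : ℕ) : ℂ) + 1 := by push_cast; ring
    show ((n + 1 + 2 : ℕ) : ℂ) • (X * A ^ (n + 2)) = _
    rw [hcast, add_smul, one_smul, ihA, e3, e4, e2]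
    abel

/-! ### chain and span lemmas -/

section ChainLemmas

variable (l₁ l₂ : ℂ × ℂ)

local notation "M" => Submodule.span ℂ (posChainSet l₁ l₂)

lemma Xkl_zero_zero : Xkl l₁ l₂ 0 0 = 1 := by
  simp [Xkl]

lemma Xkl_mem {k l : ℕ} (h : 0 < k + l) : Xkl l₁ l₂ k l ∈ M := by
  apply Submodule.subset_span
  refine ⟨0, fun _ => k, fun _ => l, ⟨0, h⟩, ?_⟩
  simp [chain, List.intersperse_singleton]

lemma inter_concat (c b : FA) : ∀ (L : List FA), L ≠ [] →
    ((L ++ [b]).intersperse c).prod = (L.intersperse c).prod * c * b := by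
  intro L
  induction L with
  | nil => intro h; exact absurd rfl h
  | cons a L ihL =>
    intro _
    cases L with
    | nil => simp [List.intersperse, mul_assoc]
    | cons d L' =>
      have : ((a :: d :: L') ++ [b]) = a :: d :: (L' ++ [b]) := by simp
      rw [this]
      have hne : (d :: L') ≠ [] := by simp
      have h2 : (d :: (L' ++ [b])) = (d :: L') ++ [b] := by simp
      rw [List.intersperse_cons_cons, List.intersperse_cons_cons, List.prod_cons,
        List.prod_cons, List.prod_cons, List.prod_cons, h2, ihL hne]
      simp only [mul_assoc]

lemma chain_ofFn_ne_nil {a : ℕ} (ks ls : Fin (a + 1) → ℕ) :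
    (List.ofFn fun i => Xkl l₁ l₂ (ks i) (ls i)) ≠ [] := by
  intro h
  have := congrArg List.length h
  simp at this

lemma chain_snoc {a : ℕ} (ks ls : Fin (a + 1) → ℕ) (k' l' : ℕ) :
    chain l₁ l₂ ks ls * Cc * Xkl l₁ l₂ k' l'
      = chain l₁ l₂ (Fin.snoc ks k') (Fin.snoc ls l') := by
  unfold chain
  have hfn : (List.ofFn fun i : Fin (a + 2) =>
        Xkl l₁ l₂ (@Fin.snoc (a + 1) (fun _ => ℕ) ks k' i) (@Fin.snoc (a + 1) (fun _ => ℕ) ls l' i))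
      = (List.ofFn fun i : Fin (a + 1) => Xkl l₁ l₂ (ks i) (ls i)) ++ [Xkl l₁ l₂ k' l'] := by
    rw [List.ofFn_succ']
    rw [List.concat_eq_append]
    congr 1
    · congr 1
      funext i
      rw [Fin.snoc_castSucc, Fin.snoc_castSucc]
    · rw [Fin.snoc_last, Fin.snoc_last]
  rw [hfn, inter_concat _ _ _ (chain_ofFn_ne_nil l₁ l₂ ks ls)]

lemma chain_cons {a : ℕ} (ks ls : Fin (a + 1) → ℕ) :
    Cc * chain l₁ l₂ ks ls = chain l₁ l₂ (Fin.cons 0 ks) (Fin.cons 0 ls) := by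
  unfold chain
  have hfn : (List.ofFn fun i : Fin (a + 2) =>
        Xkl l₁ l₂ (@Fin.cons (a + 1) (fun _ => ℕ) 0 ks i) (@Fin.cons (a + 1) (fun _ => ℕ) 0 ls i))
      = Xkl l₁ l₂ 0 0 :: (List.ofFn fun i : Fin (a + 1) => Xkl l₁ l₂ (ks i) (ls i)) := by
    rw [List.ofFn_succ]
    congr 1
  rw [hfn, Xkl_zero_zero]
  obtain ⟨d, L', hL⟩ : ∃ d L', (List.ofFn fun i : Fin (a + 1) => Xkl l₁ l₂ (ks i) (ls i))
      = d :: L' := by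
    cases hL : (List.ofFn fun i : Fin (a + 1) => Xkl l₁ l₂ (ks i) (ls i)) with
    | nil => exact absurd hL (chain_ofFn_ne_nil l₁ l₂ ks ls)
    | cons d L' => exact ⟨d, L', rfl⟩
  rw [hL, List.intersperse_cons_cons, List.prod_cons, List.prod_cons, one_mul]

lemma M_mul_cc_Xkl {m : FA} (hm : m ∈ M) (k' l' : ℕ) :
    m * Cc * Xkl l₁ l₂ k' l' ∈ M := by
  induction hm using Submodule.span_induction with
  | mem z hz =>
    obtain ⟨a, ks, ls, ⟨i0, hpos⟩, rfl⟩ := hz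
    rw [chain_snoc]
    apply Submodule.subset_span
    refine ⟨a + 1, Fin.snoc ks k', Fin.snoc ls l', ⟨i0.castSucc, ?_⟩, rfl⟩
    rw [Fin.snoc_castSucc, Fin.snoc_castSucc]
    exact hpos
  | zero => simp
  | add u v _ _ hu hv => rw [add_mul, add_mul]; exact Submodule.add_mem _ hu hv
  | smul c u _ hu => rw [smul_mul_assoc, smul_mul_assoc]; exact Submodule.smul_mem _ _ hu

lemma M_cc_mul {m : FA} (hm : m ∈ M) : Cc * m ∈ M := by
  induction hm using Submodule.span_induction with
  | mem z hz =>
    obtain ⟨a, ks, ls, ⟨i0, hpos⟩, rfl⟩ := hz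
    rw [chain_cons]
    apply Submodule.subset_span
    exact ⟨a + 1, Fin.cons 0 ks, Fin.cons 0 ls, ⟨i0.succ, by simpa using hpos⟩, rfl⟩
  | zero => simp
  | add u v _ _ hu hv => rw [mul_add]; exact Submodule.add_mem _ hu hv
  | smul c u _ hu => rw [mul_smul_comm]; exact Submodule.smul_mem _ _ hu

lemma cpow_Xkl_mem {k l : ℕ} (h : 0 < k + l) (t : ℕ) : Cc ^ t * Xkl l₁ l₂ k l ∈ M := by
  induction t with
  | zero => simpa using Xkl_mem l₁ l₂ h
  | succ t ih =>
    have : Cc ^ (t + 1) * Xkl l₁ l₂ k l = Cc * (Cc ^ t * Xkl l₁ l₂ k l) := by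
      rw [pow_succ', mul_assoc]
    rw [this]
    exact M_cc_mul l₁ l₂ ih

end ChainLemmas

/-! ### polynomial coefficient extraction -/

lemma poly_mem (N : ℕ) (C : ℕ → FA) (W : Submodule ℂ FA)
    (h : ∀ s : ℂ, (∑ p ∈ Finset.range N, s ^ p • C p) ∈ W) :
    ∀ p, p < N → C p ∈ W := by
  intro p hp
  have key : ∀ φ : Module.Dual ℂ (FA ⧸ W), φ (W.mkQ (C p)) = 0 := by
    intro φ
    set q : Polynomial ℂ
      := ∑ p' ∈ Finset.range N, Polynomial.monomial p' (φ (W.mkQ (C p'))) with hq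
    have heval : ∀ s : ℂ, q.eval s = 0 := by
      intro s
      have h0 : W.mkQ (∑ p' ∈ Finset.range N, s ^ p' • C p') = 0 := by
        rw [Submodule.mkQ_apply, Submodule.Quotient.mk_eq_zero]
        exact h s
      have he : q.eval s = φ (W.mkQ (∑ p' ∈ Finset.range N, s ^ p' • C p')) := by
        rw [map_sum, map_sum, hq, Polynomial.eval_finset_sum]
        refine Finset.sum_congr rfl fun p' _ => ?_
        rw [Polynomial.eval_monomial]
        simp only [map_smul, smul_eq_mul]
        ring
      rw [he, h0, map_zero]
    have hq0 : q = 0 := Polynomial.zero_of_eval_zero q heval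
    have hcoeff : q.coeff p = φ (W.mkQ (C p)) := by
      rw [hq, Polynomial.finset_sum_coeff]
      rw [Finset.sum_eq_single p]
      · rw [Polynomial.coeff_monomial, if_pos rfl]
      · intro b _ hb
        rw [Polynomial.coeff_monomial, if_neg hb]
      · intro hnp
        exact absurd (Finset.mem_range.mpr hp) hnp
    rw [hq0, Polynomial.coeff_zero] at hcoeff
    exact hcoeff.symm
  have hz := (Module.forall_dual_apply_eq_zero_iff ℂ (W.mkQ (C p))).mp key
  rwa [Submodule.mkQ_apply, Submodule.Quotient.mk_eq_zero] at hz

/-! ### the bracket identity -/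

lemma brkt (l₁ l₂ : ℂ × ℂ) : Xs l₁ * Xs l₂ = Xs l₂ * Xs l₁ + bra l₁ l₂ • Cc := by
  simp only [Xs, Cc, bra]
  simp only [add_mul, mul_add, smul_mul_assoc, mul_smul_comm, smul_smul, smul_sub, sub_smul]
  module

lemma xA_comm (l₁ l₂ : ℂ × ℂ) (α β : ℂ) :
    Xs l₁ * (α • Xs l₁ + β • Xs l₂)
      = (α • Xs l₁ + β • Xs l₂) * Xs l₁ + (β * bra l₁ l₂) • Cc := by
  rw [mul_add, add_mul, mul_smul_comm, mul_smul_comm, smul_mul_assoc, smul_mul_assoc,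
    brkt l₁ l₂, smul_add, smul_smul]
  abel

/-! ### membership helpers -/

lemma symF_mem_aux (l₁ l₂ : ℂ × ℂ) {r k : ℕ} (hk : k ≤ r) (hr : 0 < r) :
    symF (Xs l₁) (Xs l₂) r k ∈ Submodule.span ℂ (posChainSet l₁ l₂) := by
  have hsplit : r = k + (r - k) := by omega
  rw [hsplit, Xkl_symF]
  exact Submodule.smul_mem _ _ (Xkl_mem l₁ l₂ (by omega))

lemma Apow_mem (l₁ l₂ : ℂ × ℂ) (α β : ℂ) {r : ℕ} (hr : 0 < r) :
    (α • Xs l₁ + β • Xs l₂) ^ r ∈ Submodule.span ℂ (posChainSet l₁ l₂) := by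
  rw [Apow]
  apply Submodule.sum_mem
  intro k hk
  exact Submodule.smul_mem _ _
    (symF_mem_aux l₁ l₂ (by simpa [Nat.lt_succ_iff] using hk) hr)

lemma M_mul_cc_Apow (l₁ l₂ : ℂ × ℂ) {m : FA}
    (hm : m ∈ Submodule.span ℂ (posChainSet l₁ l₂)) (α β : ℂ) (r : ℕ) :
    m * Cc * (α • Xs l₁ + β • Xs l₂) ^ r ∈ Submodule.span ℂ (posChainSet l₁ l₂) := by
  rw [Apow, Finset.mul_sum]
  apply Submodule.sum_mem
  intro k hk
  rw [mul_smul_comm]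
  apply Submodule.smul_mem
  have hk' : k ≤ r := by simpa [Nat.lt_succ_iff] using hk
  have hsplit : r = k + (r - k) := by omega
  rw [hsplit, Xkl_symF, mul_smul_comm]
  exact Submodule.smul_mem _ _ (M_mul_cc_Xkl l₁ l₂ hm _ _)

lemma cpow_Apow_mem (l₁ l₂ : ℂ × ℂ) (α β : ℂ) {r : ℕ} (hr : 0 < r) (t : ℕ) :
    Cc ^ t * (α • Xs l₁ + β • Xs l₂) ^ r ∈ Submodule.span ℂ (posChainSet l₁ l₂) := by
  rw [Apow, Finset.mul_sum]
  apply Submodule.sum_mem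
  intro k hk
  rw [mul_smul_comm]
  apply Submodule.smul_mem
  have hk' : k ≤ r := by simpa [Nat.lt_succ_iff] using hk
  have hsplit : r = k + (r - k) := by omega
  rw [hsplit, Xkl_symF, mul_smul_comm]
  exact Submodule.smul_mem _ _ (cpow_Xkl_mem l₁ l₂ (by omega) t)

/-! ### the main induction -/

lemma main_lemma (l₁ l₂ : ℂ × ℂ) : ∀ (j n : ℕ) (α β : ℂ),
    Xs l₁ ^ j * (α • Xs l₁ + β • Xs l₂) ^ n
        - (if j = n then (β * bra l₁ l₂) ^ j / ((j + 1).factorial : ℂ) else 0) • Cc ^ j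
      ∈ Submodule.span ℂ (posChainSet l₁ l₂) := by
  intro j
  induction j with
  | zero =>
    intro n α β
    cases n with
    | zero => simp
    | succ n =>
      rw [if_neg (by omega : ¬ (0 : ℕ) = n + 1), zero_smul, sub_zero, pow_zero, one_mul]
      exact Apow_mem l₁ l₂ α β (by omega)
  | succ j ih =>
    intro n α β
    cases n with
    | zero =>
      rw [if_neg (by omega : ¬ j + 1 = 0), zero_smul, sub_zero, pow_zero, mul_one]
      have h1 : Xs l₁ ^ (j + 1) = symF (Xs l₁) (Xs l₂) ((j + 1) + 0) (j + 1) :=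
        (symF_self _ _ _).symm
      rw [h1, Xkl_symF]
      exact Submodule.smul_mem _ _ (Xkl_mem l₁ l₂ (by omega))
    | succ n =>
      have hκgoal : (if j + 1 = n + 1 then
            (β * bra l₁ l₂) ^ (j + 1) / (((j + 1) + 1).factorial : ℂ) else 0)
          = (if j = n then (β * bra l₁ l₂) ^ (j + 1) / ((j + 2).factorial : ℂ) else 0) := by
        by_cases hjn : j = n
        · subst hjn; rw [if_pos rfl, if_pos rfl]
        · rw [if_neg (by omega), if_neg hjn]
      rw [hκgoal]
      set x := Xs l₁ with hx
      set y := Xs l₂ with hy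
      set br := bra l₁ l₂ with hbr
      set A := α • x + β • y with hA
      set w : FA := (β * br) • Cc with hw
      set M := Submodule.span ℂ (posChainSet l₁ l₂) with hM
      set κ : ℂ := if j = n then (β * br) ^ (j + 1) / ((j + 2).factorial : ℂ) else 0 with hκ
      set κn : ℂ := if j = n then (β * br) ^ j / ((j + 1).factorial : ℂ) else 0 with hκn
      set κ0 : ℂ := if j = n + 2 then (β * br) ^ j / ((j + 1).factorial : ℂ) else 0 with hκ0
      have hcomm : x * A = A * x + w := xA_comm l₁ l₂ α β
      set T : FA := ∑ p ∈ Finset.HasAntidiagonal.antidiagonal (n + 1), A ^ p.1 * x * A ^ p.2 with hT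
      -- step 1 : x^j * T ∈ M
      have hTmem : x ^ j * T ∈ M := by
        set C : ℕ → FA := fun p => if p = 0
          then x ^ j * symF x A (n + 2) 0 - κ0 • Cc ^ j
          else x ^ j * symF x A (n + 2) p with hC
        have hs : ∀ s : ℂ, (∑ p ∈ Finset.range (n + 3), s ^ p • C p) ∈ M := by
          intro s
          have hAs : (α + s) • Xs l₁ + β • Xs l₂ = s • x + (1 : ℂ) • A := by
            rw [hA, add_smul, one_smul, ← hx, ← hy]
            abel
          have hexp : x ^ j * ((α + s) • Xs l₁ + β • Xs l₂) ^ (n + 2)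
              = ∑ p ∈ Finset.range (n + 3), s ^ p • (x ^ j * symF x A (n + 2) p) := by
            rw [hAs]
            rw [Apow x A s 1 (n + 2)]
            rw [Finset.mul_sum]
            refine Finset.sum_congr rfl fun p _ => ?_
            rw [mul_smul_comm]
            congr 1
            rw [one_pow, mul_one]
          have hsum : ∑ p ∈ Finset.range (n + 3), s ^ p • C p
              = x ^ j * ((α + s) • Xs l₁ + β • Xs l₂) ^ (n + 2) - κ0 • Cc ^ j := by
            rw [hexp]
            have hterm : ∀ p ∈ Finset.range (n + 3), s ^ p • C p
                = s ^ p • (x ^ j * symF x A (n + 2) p)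
                  - (if p = 0 then κ0 • Cc ^ j else 0) := by
              intro p _
              by_cases hp : p = 0
              · subst hp
                rw [hC]
                simp
              · rw [hC]
                simp [hp]
            rw [Finset.sum_congr rfl hterm, Finset.sum_sub_distrib]
            congr 1
            rw [Finset.sum_ite_eq' (Finset.range (n + 3)) 0 (fun _ => κ0 • Cc ^ j)]
            simp
          rw [hsum]
          exact ih (n + 2) (α + s) β
        have hC1 := poly_mem (n + 3) C M hs 1 (by omega)
        have hC1eq : C 1 = x ^ j * T := by
          rw [hC]
          simp only [if_neg one_ne_zero]
          rw [symF_one, hT]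
        rwa [hC1eq] at hC1
      -- step 2 : correction terms
      have hcorr : ∀ q r : ℕ, x ^ j * (A ^ q * w * A ^ r)
          - (if r = 0 then ((β * br) * (if j = q then (β * br) ^ j / ((j + 1).factorial : ℂ)
              else 0)) else 0) • Cc ^ (j + 1) ∈ M := by
        intro q r
        have e1 : x ^ j * (A ^ q * w * A ^ r)
            = (β * br) • ((x ^ j * A ^ q) * Cc * A ^ r) := by
          rw [hw, mul_smul_comm, smul_mul_assoc, mul_smul_comm]
          congr 1
          rw [← mul_assoc, ← mul_assoc]
        have e2 : (x ^ j * A ^ q) * Cc * A ^ r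
            = ((x ^ j * A ^ q
                - (if j = q then (β * br) ^ j / ((j + 1).factorial : ℂ) else 0) • Cc ^ j)
                  * Cc * A ^ r)
              + (if j = q then (β * br) ^ j / ((j + 1).factorial : ℂ) else 0)
                  • (Cc ^ (j + 1) * A ^ r) := by
          rw [sub_mul, sub_mul, smul_mul_assoc, smul_mul_assoc, pow_succ]
          abel
        have hD : (x ^ j * A ^ q
            - (if j = q then (β * br) ^ j / ((j + 1).factorial : ℂ) else 0) • Cc ^ j) ∈ M :=
          ih q α β
        have hfirst := M_mul_cc_Apow l₁ l₂ hD α β r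
        rw [e1, e2, smul_add]
        cases r with
        | zero =>
          rw [if_pos rfl]
          have e3 : (β * br) • ((if j = q then (β * br) ^ j / ((j + 1).factorial : ℂ) else 0)
              • (Cc ^ (j + 1) * A ^ 0))
              = ((β * br) * (if j = q then (β * br) ^ j / ((j + 1).factorial : ℂ) else 0))
              • Cc ^ (j + 1) := by
            rw [pow_zero, mul_one, smul_smul]
          rw [e3, add_sub_cancel_right]
          exact Submodule.smul_mem _ _ hfirst
        | succ r' =>
          rw [if_neg (by omega : ¬ r' + 1 = 0), zero_smul, sub_zero]
          refine Submodule.add_mem _ (Submodule.smul_mem _ _ hfirst) ?_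
          exact Submodule.smul_mem _ _ (Submodule.smul_mem _ _
            (cpow_Apow_mem l₁ l₂ α β (by omega) (j + 1)))
      -- step 3 : sum of corrections
      have hS2 : (∑ p ∈ Finset.HasAntidiagonal.antidiagonal n,
            ((p.2 + 1 : ℕ) : ℂ) • (x ^ j * (A ^ p.1 * w * A ^ p.2)))
          - ((β * br) * κn) • Cc ^ (j + 1) ∈ M := by
        have hsum : (∑ p ∈ Finset.HasAntidiagonal.antidiagonal n, ((p.2 + 1 : ℕ) : ℂ)
            • (x ^ j * (A ^ p.1 * w * A ^ p.2)
              - (if p.2 = 0 then ((β * br) * (if j = p.1 then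
                  (β * br) ^ j / ((j + 1).factorial : ℂ) else 0)) else 0) • Cc ^ (j + 1))) ∈ M :=
          Submodule.sum_mem _ fun p _ => Submodule.smul_mem _ _ (hcorr p.1 p.2)
        have hsingle : ∑ p ∈ Finset.HasAntidiagonal.antidiagonal n, ((p.2 + 1 : ℕ) : ℂ)
            • ((if p.2 = 0 then ((β * br) * (if j = p.1 then
                (β * br) ^ j / ((j + 1).factorial : ℂ) else 0)) else 0) • Cc ^ (j + 1))
            = ((β * br) * κn) • Cc ^ (j + 1) := by
          rw [Finset.sum_eq_single ((n : ℕ), (0 : ℕ))]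
          · rw [hκn]
            norm_num
          · intro p hp hne
            have hp' := Finset.HasAntidiagonal.mem_antidiagonal.mp hp
            have hp2 : ¬ p.2 = 0 := by
              intro h0
              apply hne
              have h1 : p.1 = n := by omega
              exact Prod.ext h1 h0
            rw [if_neg hp2, zero_smul, smul_zero]
          · intro hnot
            exact absurd (Finset.HasAntidiagonal.mem_antidiagonal.mpr (by omega)) hnot
        have hsplit : ∑ p ∈ Finset.HasAntidiagonal.antidiagonal n, ((p.2 + 1 : ℕ) : ℂ)
            • (x ^ j * (A ^ p.1 * w * A ^ p.2)
              - (if p.2 = 0 then ((β * br) * (if j = p.1 then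
                  (β * br) ^ j / ((j + 1).factorial : ℂ) else 0)) else 0) • Cc ^ (j + 1))
            = (∑ p ∈ Finset.HasAntidiagonal.antidiagonal n,
                ((p.2 + 1 : ℕ) : ℂ) • (x ^ j * (A ^ p.1 * w * A ^ p.2)))
              - ((β * br) * κn) • Cc ^ (j + 1) := by
          rw [← hsingle, ← Finset.sum_sub_distrib]
          exact Finset.sum_congr rfl fun p _ => smul_sub _ _ _
        rwa [hsplit] at hsum
      -- step 4 : the transport identity multiplied by x^j
      have hEQ : ((n + 2 : ℕ) : ℂ) • (x ^ (j + 1) * A ^ (n + 1))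
          = x ^ j * T + ∑ p ∈ Finset.HasAntidiagonal.antidiagonal n,
              ((p.2 + 1 : ℕ) : ℂ) • (x ^ j * (A ^ p.1 * w * A ^ p.2)) := by
        have h1 := congrArg (fun z => x ^ j * z) (MT A x w hcomm n)
        rw [mul_smul_comm, ← mul_assoc, ← pow_succ, mul_add] at h1
        rw [h1, hT]
        congr 1
        rw [Finset.mul_sum]
        exact Finset.sum_congr rfl fun p _ => (mul_smul_comm _ _ _)
      -- step 5 : finish
      have harith : ((n + 2 : ℕ) : ℂ) * κ = (β * br) * κn := by
        by_cases hjn : j = n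
        · subst hjn
          rw [hκ, hκn, if_pos rfl, if_pos rfl]
          have hfac : ((j + 2).factorial : ℂ) = ((j + 2 : ℕ) : ℂ) * ((j + 1).factorial : ℂ) := by
            rw [Nat.factorial_succ]
            push_cast
            ring
          have h1 : ((j + 1).factorial : ℂ) ≠ 0 := by
            exact_mod_cast (Nat.factorial_pos (j + 1)).ne'
          have h2 : ((j + 2 : ℕ) : ℂ) ≠ 0 := by
            exact_mod_cast (by omega : (j + 2 : ℕ) ≠ 0)
          rw [hfac, ← mul_div_assoc, mul_div_mul_left _ _ h2, ← mul_div_assoc, ← pow_succ']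
        · rw [hκ, hκn, if_neg hjn, if_neg hjn, mul_zero, mul_zero]
      have hscaled : ((n + 2 : ℕ) : ℂ) • (x ^ (j + 1) * A ^ (n + 1) - κ • Cc ^ (j + 1)) ∈ M := by
        rw [smul_sub, hEQ, smul_smul, harith]
        have hadd := Submodule.add_mem _ hTmem hS2
        convert hadd using 1
        abel
      have hne : ((n + 2 : ℕ) : ℂ) ≠ 0 := by
        exact_mod_cast (by omega : (n + 2 : ℕ) ≠ 0)
      exact (Submodule.smul_mem_iff M hne).mp hscaled

theorem statement6 (m : ℕ) (l₁ l₂ : ℂ × ℂ) :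
    Xs l₁ ^ m * Xs l₂ ^ m -
        (bra l₁ l₂ ^ m / ((m + 1).factorial : ℂ)) • Cc ^ m ∈
      Submodule.span ℂ (posChainSet l₁ l₂) := by
  have h := main_lemma l₁ l₂ m m 0 1
  simpa using h

end
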